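/- Let t ≥ 2 be an integer and 2 ≤ v_1 ≤ v_2 ≤ ⋯ ≤ v_{t+1}. Then there exists an MCA(N; t, t+1, (v_1, v_2,…, v_{t+1})) of optimum size N = v_2·v_3⋯v_{t+1} = ∏_{i=2}^{t+1} v_i. -/

import Mathlib

/-- An array `A` (rows indexed by `R`, columns by `J`) is of type `v` if every
entry in column `j` lies in `Z_{v j} = {0, 1, …, v j - 1}`. -/
def IsArray {R J : Type*} (v : J → ℕ) (A : R → J → ℕ) : Prop :=
  ∀ r j, A r j < v j

/-- An `s`-way interaction: a set of `s` pairs `(j, σ)` with pairwise distinct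
column indices `j` and value `σ ∈ Z_{v j}`. -/
def IsInteraction {J : Type*} [DecidableEq J] (v : J → ℕ) (s : ℕ)
    (T : Finset (J × ℕ)) : Prop :=
  T.card = s ∧ (T.image Prod.fst).card = s ∧ ∀ p ∈ T, p.2 < v p.1

/-- `rho A T`: the set of rows of `A` in which the interaction `T` is covered. -/
def rho {R J : Type*} [Fintype R] (A : R → J → ℕ) (T : Finset (J × ℕ)) :
    Finset R :=
  Finset.univ.filter fun r => ∀ p ∈ T, A r p.1 = p.2

/-- `rhoSet A 𝒯 = ⋃_{T ∈ 𝒯} rho A T`. -/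
def rhoSet {R J : Type*} [Fintype R] [DecidableEq R] (A : R → J → ℕ)
    (Ts : Finset (Finset (J × ℕ))) : Finset R :=
  Ts.sup (rho A)

/-- A `(d,t)`-detecting array of type `v`: for every `t`-way interaction `T` and
every set `𝒯` of exactly `d` `t`-way interactions,
`ρ(A,T) ⊆ ρ(A,𝒯) ↔ T ∈ 𝒯`. -/
def IsDTA {R J : Type*} [Fintype R] [DecidableEq R] [DecidableEq J] (v : J → ℕ) (d t : ℕ)
    (A : R → J → ℕ) : Prop :=
  IsArray v A ∧
    ∀ T : Finset (J × ℕ), IsInteraction v t T →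
      ∀ Ts : Finset (Finset (J × ℕ)), Ts.card = d →
        (∀ T' ∈ Ts, IsInteraction v t T') →
          (rho A T ⊆ rhoSet A Ts ↔ T ∈ Ts)

/-- A mixed covering array `MCA_λ(N; t, k, v)`: an array of type `v` such that
`|ρ(A,T)| ≥ λ` for every `t`-way interaction `T`. -/
def IsMCA {R J : Type*} [Fintype R] [DecidableEq J] (v : J → ℕ) (lam t : ℕ)
    (A : R → J → ℕ) : Prop :=
  IsArray v A ∧ ∀ T : Finset (J × ℕ), IsInteraction v t T → lam ≤ (rho A T).card

/-- Super-simple of strength `t`: every `(t+1)`-way interaction is covered by at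
most one row. -/
def IsSuperSimple {R J : Type*} [Fintype R] [DecidableEq J] (v : J → ℕ) (t : ℕ)
    (A : R → J → ℕ) : Prop :=
  ∀ T : Finset (J × ℕ), IsInteraction v (t + 1) T → (rho A T).card ≤ 1

/-- An orthogonal array `OA_λ(t, k, v)`: all entries in `Z_v` and
`|ρ(A,T)| = λ` for every `t`-way interaction `T`. (The size requirement
`N = λ·v^t` is imposed on the row-index type in the statements.) -/
def IsOA {R J : Type*} [Fintype R] [DecidableEq J] (vlev lam t : ℕ)
    (A : R → J → ℕ) : Prop :=
  IsArray (fun _ : J => vlev) A ∧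
    ∀ T : Finset (J × ℕ), IsInteraction (fun _ : J => vlev) t T →
      (rho A T).card = lam

/-- `Te` is an extension of the interaction `T`: it is obtained from `T` by
adjoining one pair `(j, σ)` with `σ ∈ Z_{v j}` whose column index `j` occurs in
no pair of `T`. -/
def IsExtension {J : Type*} [DecidableEq J] (v : J → ℕ)
    (T Te : Finset (J × ℕ)) : Prop :=
  ∃ p : J × ℕ, p.2 < v p.1 ∧ (∀ q ∈ T, q.1 ≠ p.1) ∧ Te = insert p T

/-- `A` is `d`-extendible (with respect to strength `t`): for every `t`-way
interaction `T` and every list of `d` extensions `T_1, …, T_d` of `T`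
(repetitions allowed), `ρ(A,T) \ (ρ(A,T_1) ∪ ⋯ ∪ ρ(A,T_d))` is nonempty. -/
def IsExtendible {R J : Type*} [Fintype R] [DecidableEq J] (v : J → ℕ)
    (d t : ℕ) (A : R → J → ℕ) : Prop :=
  ∀ T : Finset (J × ℕ), IsInteraction v t T →
    ∀ Te : Fin d → Finset (J × ℕ), (∀ i, IsExtension v T (Te i)) →
      ∃ r ∈ rho A T, ∀ i, r ∉ rho A (Te i)

/-- Lemma: for any `t ≥ 2` and `2 ≤ v_1 ≤ ⋯ ≤ v_{t+1}` there
exists an `MCA(N; t, t+1, (v_1,…,v_{t+1}))` of optimum size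
`N = ∏_{i=2}^{t+1} v_i`. -/
theorem stmt_18 {t : ℕ} (ht : 2 ≤ t)
    (v : Fin (t + 1) → ℕ) (hmono : Monotone v) (hv2 : 2 ≤ v 0) :
    ∃ A : Fin (∏ i ∈ Finset.univ.filter (fun i : Fin (t + 1) => (i : ℕ) ≠ 0), v i) →
        Fin (t + 1) → ℕ,
      IsMCA v 1 t A := by
  classical
  have hv0pos : 0 < v 0 := by omega
  set N := ∏ i ∈ Finset.univ.filter (fun i : Fin (t + 1) => (i : ℕ) ≠ 0), v i with hN
  have hcard : Fintype.card (∀ i : {i : Fin (t+1) // (i:ℕ) ≠ 0}, Fin (v i)) = N := by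
    rw [Fintype.card_pi]
    simp only [Fintype.card_fin]
    exact (Finset.prod_subtype _ (by simp) (fun i => v i)).symm
  let e : Fin N ≃ (∀ i : {i : Fin (t+1) // (i:ℕ) ≠ 0}, Fin (v i)) :=
    (Fintype.equivFinOfCardEq hcard).symm
  refine ⟨fun r j => if h : (j:ℕ) ≠ 0 then (e r ⟨j, h⟩ : ℕ)
      else (∑ i : {i : Fin (t+1) // (i:ℕ) ≠ 0}, (e r i : ℕ)) % v 0, ?_, ?_⟩
  · intro r j
    by_cases h : (j:ℕ) ≠ 0
    · simpa [h] using (e r ⟨j, h⟩).isLt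
    · have hj : j = 0 := Fin.ext (by simpa using h)
      subst hj
      simp [Nat.mod_lt _ hv0pos]
  · rintro T ⟨hTcard, hTimg, hTval⟩
    set I := T.image Prod.fst with hI
    have hinj : Set.InjOn Prod.fst (↑T : Set (Fin (t+1) × ℕ)) := Finset.card_image_iff.mp (hTimg.trans hTcard.symm)
    -- the unique missing column j0
    have hsd : (Finset.univ \ I).card = 1 := by
      rw [Finset.card_sdiff_of_subset (Finset.subset_univ I)]
      simp [hTimg]
    obtain ⟨j0, hj0⟩ := Finset.card_eq_one.mp hsd
    have hj0notI : j0 ∉ I := by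
      have : j0 ∈ Finset.univ \ I := hj0 ▸ Finset.mem_singleton_self j0
      exact (Finset.mem_sdiff.mp this).2
    have hmemI : ∀ j : Fin (t+1), j ≠ j0 → j ∈ I := by
      intro j hj
      by_contra hnot
      have : j ∈ Finset.univ \ I := Finset.mem_sdiff.mpr ⟨Finset.mem_univ _, hnot⟩
      rw [hj0, Finset.mem_singleton] at this
      exact hj this
    -- the value function g
    set g : Fin (t+1) → ℕ := fun j => (T.filter fun p => p.1 = j).sup Prod.snd with hg
    have hgeq : ∀ p ∈ T, g p.1 = p.2 := by
      intro p hp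
      have hfilt : T.filter (fun q => q.1 = p.1) = {p} := by
        ext q
        simp only [Finset.mem_filter, Finset.mem_singleton]
        constructor
        · rintro ⟨hq, hq1⟩
          exact hinj (Finset.mem_coe.mpr hq) (Finset.mem_coe.mpr hp) hq1
        · rintro rfl; exact ⟨hp, rfl⟩
      simp [hg, hfilt]
    have hglt : ∀ j ∈ I, g j < v j := by
      intro j hj
      obtain ⟨p, hp, rfl⟩ := Finset.mem_image.mp hj
      rw [hgeq p hp]
      exact hTval p hp
    -- the special value for column j0
    set s : ℕ := ∑ i ∈ Finset.univ.filter
        (fun i : {i : Fin (t+1) // (i:ℕ) ≠ 0} => ¬((i : Fin (t+1)) = j0)),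
        g (i : Fin (t+1)) with hs
    set xval : ℕ := (g 0 + (v 0 - s % v 0)) % v 0 with hxval
    have hxlt : xval < v 0 := Nat.mod_lt _ hv0pos
    have hxltj0 : xval < v j0 := lt_of_lt_of_le hxlt (hmono (Fin.zero_le j0))
    -- the row
    set x : ∀ i : {i : Fin (t+1) // (i:ℕ) ≠ 0}, Fin (v i) := fun i =>
      if h : (i : Fin (t+1)) = j0 then ⟨xval, by rw [h]; exact hxltj0⟩
      else ⟨g (i : Fin (t+1)), hglt _ (hmemI _ h)⟩ with hx
    set r : Fin N := e.symm x with hr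
    have hex : e r = x := Equiv.apply_symm_apply e x
    -- modular arithmetic key fact
    have hmodeq : (xval + s) % v 0 = g 0 % v 0 := by
      have h1 : xval ≡ g 0 + (v 0 - s % v 0) [MOD v 0] := Nat.mod_modEq _ _
      have h2 : s ≡ s % v 0 [MOD v 0] := (Nat.mod_modEq _ _).symm
      have h3 := h1.add h2
      have h4 : g 0 + (v 0 - s % v 0) + s % v 0 = g 0 + v 0 := by
        have := Nat.mod_lt s hv0pos; omega
      rw [h4] at h3
      calc (xval + s) % v 0 = (g 0 + v 0) % v 0 := h3
        _ = g 0 % v 0 := Nat.add_mod_right _ _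
    -- the sum of the row entries
    have hsum : (∑ i : {i : Fin (t+1) // (i:ℕ) ≠ 0}, (x i : ℕ)) % v 0 = (xval + s) % v 0 ∨
        j0 = 0 := by
      by_cases hj00 : j0 = 0
      · exact Or.inr hj00
      · left
        have hne0 : (j0 : ℕ) ≠ 0 := fun h => hj00 (Fin.ext (by simpa using h))
        have hsplit := Finset.sum_filter_add_sum_filter_not Finset.univ
          (fun i : {i : Fin (t+1) // (i:ℕ) ≠ 0} => (i : Fin (t+1)) = j0)
          (fun i => (x i : ℕ))
        have h1 : ∑ i ∈ Finset.univ.filter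
            (fun i : {i : Fin (t+1) // (i:ℕ) ≠ 0} => (i : Fin (t+1)) = j0),
            (x i : ℕ) = xval := by
          have hfe : Finset.univ.filter
              (fun i : {i : Fin (t+1) // (i:ℕ) ≠ 0} => (i : Fin (t+1)) = j0)
              = {⟨j0, hne0⟩} := by
            ext i
            simp only [Finset.mem_filter, Finset.mem_univ, true_and, Finset.mem_singleton]
            constructor
            · intro h; exact Subtype.ext h
            · rintro rfl; rfl
          rw [hfe, Finset.sum_singleton]
          simp [hx]
        have h2 : ∑ i ∈ Finset.univ.filter
            (fun i : {i : Fin (t+1) // (i:ℕ) ≠ 0} => ¬((i : Fin (t+1)) = j0)),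
            (x i : ℕ) = s := by
          rw [hs]
          refine Finset.sum_congr rfl ?_
          intro i hi
          have hi' : ¬((i : Fin (t+1)) = j0) := (Finset.mem_filter.mp hi).2
          simp [hx, hi']
        rw [← hsplit, h1, h2]
    -- show r covers T
    have hrmem : r ∈ rho (fun (r : Fin N) (j : Fin (t+1)) => if h : (j:ℕ) ≠ 0 then (e r ⟨j, h⟩ : ℕ)
        else (∑ i : {i : Fin (t+1) // (i:ℕ) ≠ 0}, (e r i : ℕ)) % v 0) T := by
      rw [rho, Finset.mem_filter]
      refine ⟨Finset.mem_univ _, ?_⟩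
      intro p hp
      have hpI : p.1 ∈ I := Finset.mem_image_of_mem Prod.fst hp
      have hpj0 : p.1 ≠ j0 := fun h => hj0notI (h ▸ hpI)
      by_cases h0 : (p.1 : ℕ) ≠ 0
      · simp only [dif_pos h0, hex]
        simp [hx, hpj0, hgeq p hp]
      · have hp1 : p.1 = 0 := Fin.ext (by simpa using h0)
        have hj00 : j0 ≠ 0 := fun h => hpj0 (hp1.trans h.symm)
        simp only [dif_neg h0, hex]
        rcases hsum with hsum | hbad
        · rw [hsum, hmodeq, Nat.mod_eq_of_lt (hglt 0 (hmemI 0 (Ne.symm hj00)))]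
          rw [← hp1, hgeq p hp]
        · exact absurd hbad hj00
    calc 1 ≤ (({r} : Finset (Fin N))).card := by simp
      _ ≤ _ := Finset.card_le_card (Finset.singleton_subset_iff.mpr hrmem)
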